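/- arXiv:2108.08354 — 3 statements merged into one kernel-verified Lean document; each statement's English description precedes it below -/
import Mathlib

section
/- For any parameters σ, ρ, β > 0, the Lorenz system possesses an absorbing ball: there exists R > 0 such that for every r > 0 there exists T = T(r) ≥ 0 so that every solution (x, y, z) of the Lorenz system with x(0)² + y(0)² + (z(0) − ρ − σ)² ≤ r² satisfies x(t)² + y(t)² + (z(t) − ρ − σ)² ≤ R² for all t ≥ T. -/
/-- **Absorbing ball for the Lorenz system.**
For any parameters `σ, ρ, β > 0`, there exists `R > 0` such that for every `r > 0`
there is a time `T ≥ 0` after which every solution of the Lorenz system starting in the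
ball of radius `r` about `(0, 0, ρ + σ)` remains in the ball of radius `R`. -/
theorem lorenz_absorbing_ball (σ ρ β : ℝ) (hσ : 0 < σ) (hρ : 0 < ρ) (hβ : 0 < β) :
    ∃ R > (0:ℝ), ∀ r > (0:ℝ), ∃ T ≥ (0:ℝ), ∀ x y z : ℝ → ℝ,
      (∀ t ≥ (0:ℝ), HasDerivAt x (σ * (y t - x t)) t) →
      (∀ t ≥ (0:ℝ), HasDerivAt y (ρ * x t - y t - x t * z t) t) →
      (∀ t ≥ (0:ℝ), HasDerivAt z (x t * y t - β * z t) t) →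
      (x 0) ^ 2 + (y 0) ^ 2 + (z 0 - ρ - σ) ^ 2 ≤ r ^ 2 →
      ∀ t ≥ T, (x t) ^ 2 + (y t) ^ 2 + (z t - ρ - σ) ^ 2 ≤ R ^ 2 := by
  set c : ℝ := min σ (min 1 β) with hcdef
  have hc0 : 0 < c := lt_min hσ (lt_min one_pos hβ)
  have hcσ : c ≤ σ := min_le_left _ _
  have hc1 : c ≤ 1 := le_trans (min_le_right _ _) (min_le_left _ _)
  have hcβ : c ≤ β := le_trans (min_le_right _ _) (min_le_right _ _)
  set K : ℝ := (β + c) * (ρ + σ) ^ 2 with hKdef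
  have hK0 : 0 < K := by positivity
  have hR2 : (0:ℝ) < K / c + 1 := by positivity
  refine ⟨Real.sqrt (K / c + 1), Real.sqrt_pos.mpr hR2, ?_⟩
  intro r hr
  refine ⟨max 0 (Real.log (r ^ 2) / c), le_max_left _ _, ?_⟩
  intro x y z hx hy hz h0 t ht
  have ht0 : (0:ℝ) ≤ t := le_trans (le_max_left _ _) ht
  set V : ℝ → ℝ := fun s => x s ^ 2 + y s ^ 2 + (z s - ρ - σ) ^ 2 with hVdef
  set W : ℝ → ℝ := fun s => (V s - K / c) * Real.exp (c * s) with hWdef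
  have hWd : ∀ s ≥ (0:ℝ), HasDerivAt W
      (((-2*σ*(x s)^2 - 2*(y s)^2 - 2*β*(z s)^2 + 2*β*(ρ+σ)*(z s)) + c * (V s - K/c))
        * Real.exp (c * s)) s := by
    intro s hs
    have hxv := hx s hs; have hyv := hy s hs; have hzv := hz s hs
    have h1 : HasDerivAt (fun u => x u ^ 2) (2 * x s * (σ * (y s - x s))) s := by
      simpa using (hxv.fun_pow 2)
    have h2 : HasDerivAt (fun u => y u ^ 2) (2 * y s * (ρ * x s - y s - x s * z s)) s := by
      simpa using (hyv.fun_pow 2)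
    have h3 : HasDerivAt (fun u => (z u - ρ - σ) ^ 2)
        (2 * (z s - ρ - σ) * (x s * y s - β * z s)) s := by
      have hz2 : HasDerivAt (fun u => z u - ρ - σ) (x s * y s - β * z s) s :=
        (hzv.sub_const ρ).sub_const σ
      simpa using (hz2.fun_pow 2)
    have hVd : HasDerivAt V
        (-2*σ*(x s)^2 - 2*(y s)^2 - 2*β*(z s)^2 + 2*β*(ρ+σ)*(z s)) s := by
      have := (h1.fun_add h2).fun_add h3
      refine this.congr_deriv ?_
      ring
    have he : HasDerivAt (fun u => Real.exp (c * u)) (c * Real.exp (c * s)) s := by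
      simpa [mul_comm] using ((hasDerivAt_id s).const_mul c).exp
    have := (hVd.sub_const (K / c)).fun_mul he
    refine this.congr_deriv ?_
    ring
  have hanti : AntitoneOn W (Set.Ici (0:ℝ)) := by
    apply antitoneOn_of_deriv_nonpos (convex_Ici 0)
    · exact fun s hs => ((hWd s hs).continuousAt).continuousWithinAt
    · rw [interior_Ici]
      exact fun s hs => ((hWd s (le_of_lt hs)).differentiableAt).differentiableWithinAt
    · rw [interior_Ici]
      intro s hs
      rw [(hWd s (le_of_lt hs)).deriv]
      apply mul_nonpos_of_nonpos_of_nonneg _ (Real.exp_nonneg _)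
      have hcV : c * (V s - K / c) = c * V s - K := by
        rw [mul_sub, mul_div_cancel₀ _ (ne_of_gt hc0)]
      have hVs : V s = x s ^ 2 + y s ^ 2 + (z s - ρ - σ) ^ 2 := rfl
      rw [hcV, hVs, hKdef]
      have h2βc : 0 < 2 * β - c := by linarith
      nlinarith [sq_nonneg ((2*β - c) * z s - (β - c) * (ρ + σ)),
        mul_nonneg (sub_nonneg.mpr hcσ) (sq_nonneg (x s)),
        mul_nonneg (sub_nonneg.mpr hc1) (sq_nonneg (y s)),
        mul_nonneg (mul_nonneg (le_of_lt hc0) (sub_nonneg.mpr hcβ)) (sq_nonneg (ρ + σ))]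
  have hWt : W t ≤ W 0 := hanti (Set.self_mem_Ici) (Set.mem_Ici.mpr ht0) ht0
  have hW0 : W 0 = V 0 - K / c := by simp [hWdef]
  have hexp : (0:ℝ) < Real.exp (c * t) := Real.exp_pos _
  have hVt : V t ≤ K / c + (V 0 - K / c) / Real.exp (c * t) := by
    have : (V t - K / c) * Real.exp (c * t) ≤ V 0 - K / c := by
      rw [← hW0]; exact hWt
    have h2 : V t - K / c ≤ (V 0 - K / c) / Real.exp (c * t) :=
      (le_div_iff₀ hexp).mpr this
    linarith
  have hr2 : r ^ 2 * Real.exp (-(c * t)) ≤ 1 := by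
    have hlog : Real.log (r ^ 2) ≤ c * t := by
      have h1 : Real.log (r ^ 2) / c ≤ t := le_trans (le_max_right _ _) ht
      calc Real.log (r ^ 2) = Real.log (r ^ 2) / c * c := by field_simp
        _ ≤ t * c := by nlinarith
        _ = c * t := mul_comm _ _
    have hrp : (0:ℝ) < r ^ 2 := by positivity
    have : r ^ 2 ≤ Real.exp (c * t) := by
      calc r ^ 2 = Real.exp (Real.log (r ^ 2)) := (Real.exp_log hrp).symm
        _ ≤ Real.exp (c * t) := Real.exp_le_exp.mpr hlog
    rw [Real.exp_neg]
    rw [mul_inv_le_iff₀ hexp] -- r^2 * (exp)⁻¹ ≤ 1 ↔ r^2 ≤ 1 * exp? check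
    linarith
  have hfinal : V t ≤ K / c + 1 := by
    have hV0 : V 0 ≤ r ^ 2 := h0
    have h1 : (V 0 - K / c) / Real.exp (c * t) ≤ r ^ 2 / Real.exp (c * t) := by
      have hKc : (0:ℝ) ≤ K / c := by positivity
      gcongr
      linarith
    have h2 : r ^ 2 / Real.exp (c * t) = r ^ 2 * Real.exp (-(c * t)) := by
      rw [Real.exp_neg]; ring
    calc V t ≤ K / c + (V 0 - K / c) / Real.exp (c * t) := hVt
      _ ≤ K / c + r ^ 2 * Real.exp (-(c * t)) := by rw [← h2]; linarith
      _ ≤ K / c + 1 := by linarith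
  calc (x t) ^ 2 + (y t) ^ 2 + (z t - ρ - σ) ^ 2 = V t := rfl
    _ ≤ K / c + 1 := hfinal
    _ = Real.sqrt (K / c + 1) ^ 2 := (Real.sq_sqrt (le_of_lt hR2)).symm
end

section
/- Suppose the Lorenz system with parameters σ, ρ, β > 0 admits an absorbing-ball bound of radius R, and the nudged system has ρ̃ = ρ, β̃ = β, μ2 = μ3 = 0, with μ1 satisfying condition (M1). Then there exists a constant c1 > 0, depending only on R, ρ, σ, β, such that for all 0 ≤ t_0 ≤ t, 𝒦(t) ≤ 𝒦(t_0) e^{−(μ/2)(t − t_0)} + (c1/(μ1 + σ̃))(Δσ)². -/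
set_option maxHeartbeats 1000000

/-- `μ = min {μ1 + σ̃, μ2 + 1, μ3 + β̃}`. -/
noncomputable def muMin (σt βt μ1 μ2 μ3 : ℝ) : ℝ :=
  min (μ1 + σt) (min (μ2 + 1) (μ3 + βt))

/-- The a priori constant `K²`. -/
noncomputable def Ksq (σ ρ β σt ρt βt μ1 μ2 μ3 R : ℝ) : ℝ :=
  2 / muMin σt βt μ1 μ2 μ3 *
    (2 * R ^ 2 * (σt - σ) ^ 2 / (μ1 + σt) + 4 * R ^ 2 * (ρt - ρ) ^ 2 / (μ2 + 1)
      + 4 * (R ^ 2 + (ρ + σ) ^ 2) * (βt - β) ^ 2 / (μ3 + βt))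

/-- The a priori constant `L²`. -/
noncomputable def Lsq (σ ρ β σt ρt βt μ1 μ2 μ3 R : ℝ) : ℝ :=
  128 / muMin σt βt μ1 μ2 μ3 *
      ((R ^ 4 + (β ^ 2 + σ ^ 2) * R ^ 2 + β ^ 2 * (ρ + σ) ^ 2) / (μ2 + 1)
        + 3 * R ^ 2 * (R ^ 2 + 2 * (ρ + σ) ^ 2 + 1) / (μ3 + βt)) *
      Ksq σ ρ β σt ρt βt μ1 μ2 μ3 R
    + 2 / muMin σt βt μ1 μ2 μ3 *
      (24 * R ^ 2 * (R ^ 2 + (ρ + σ) ^ 2 + 1) * (σt - σ) ^ 2 / (μ1 + σt)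
        + 8 * σ ^ 2 * R ^ 2 * (ρt - ρ) ^ 2 / (μ2 + 1)
        + 16 * (R ^ 4 + β ^ 2 * R ^ 2 + β ^ 2 * (ρ + σ) ^ 2) * (βt - β) ^ 2 / (μ3 + βt))

/-- Condition (M1). -/
def CondM1 (σ ρ σt ρt βt μ1 μ2 μ3 R : ℝ) : Prop :=
  μ1 + σt ≥ 16 * (((σt - σ) ^ 2 + 3 * (σ + ρ) ^ 2 + 2 * R ^ 2) / (μ2 + 1)
      + R ^ 2 / (2 * (μ3 + βt)))
  ∧ μ2 + 1 ≥ 4 * (ρt - ρ) ^ 2 / (μ1 + σt)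

/-- Condition (M2). -/
def CondM2 (σ ρ β σt ρt βt μ1 μ2 μ3 R : ℝ) : Prop :=
  μ1 + σt ≥
    32 * ((σt - σ) ^ 2 + (ρt - ρ) ^ 2 + R ^ 2 + 2 * (ρ + σ) ^ 2) / (μ2 + 1)
    + 64 * (1 / (μ2 + 1) + 1 / (μ3 + βt)) * Ksq σ ρ β σt ρt βt μ1 μ2 μ3 R
    + 16 * R ^ 2 / (μ3 + βt)

/-- The energy `𝒦(t) = (u(t)² + v(t)² + w(t)²)/2` of the differences. -/
noncomputable def Kfun (x y z xt yt zt : ℝ → ℝ) (t : ℝ) : ℝ :=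
  ((xt t - x t) ^ 2 + (yt t - y t) ^ 2 + (zt t - z t) ^ 2) / 2

/-- The energy `ℒ(t) = (u'(t)² + v'(t)² + w'(t)²)/2` of the derivatives of the differences. -/
noncomputable def Lfun (x y z xt yt zt : ℝ → ℝ) (t : ℝ) : ℝ :=
  ((deriv (fun s => xt s - x s) t) ^ 2 + (deriv (fun s => yt s - y s) t) ^ 2
    + (deriv (fun s => zt s - z s) t) ^ 2) / 2

open Set Filter Topology in
/-- Grönwall's inequality for a scalar function with a genuine derivative. -/
lemma gronwall_hasDerivAt' {f g : ℝ → ℝ} {K ε δ a b : ℝ}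
    (hf : ∀ x ∈ Set.Icc a b, HasDerivAt f (g x) x)
    (ha : f a ≤ δ)
    (bound : ∀ x ∈ Set.Ico a b, g x ≤ K * f x + ε) :
    ∀ x ∈ Set.Icc a b, f x ≤ gronwallBound δ K ε (x - a) := by
  apply le_gronwallBound_of_liminf_deriv_right_le (f' := g)
  · exact fun x hx => (hf x hx).continuousAt.continuousWithinAt
  · intro x hx r hr
    have h1 : Tendsto (slope f x) (𝓝[>] x) (𝓝 (g x)) :=
      (hasDerivAt_iff_tendsto_slope.1 (hf x (Ico_subset_Icc_self hx))).mono_left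
        (nhdsWithin_mono x fun z hz => (ne_of_lt hz).symm)
    have h2 : ∀ᶠ z in 𝓝[>] x, slope f x z < r := h1.eventually_lt_const hr
    have h3 : ∀ᶠ z in 𝓝[>] x, (z - x)⁻¹ * (f z - f x) < r := by
      filter_upwards [h2] with z hz
      simpa only [slope_def_field, div_eq_inv_mul] using hz
    exact h3.frequently
  · exact ha
  · exact bound

/-- The core pointwise energy estimate, with `U, V, W` the differences. -/
lemma lorenz_key_ineq (σ ρ β R σt μ1 m P Q Z U V W : ℝ)
    (hβ : 0 < β) (hApos : 0 < μ1 + σt)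
    (hb : P ^ 2 + Q ^ 2 + (Z - ρ - σ) ^ 2 ≤ R ^ 2)
    (hA1 : 16 * ((σt - σ) ^ 2 + 3 * (σ + ρ) ^ 2 + 2 * R ^ 2) + 8 * R ^ 2 / β ≤ μ1 + σt)
    (hm1 : m ≤ 1) (hmβ : m ≤ β) (hmA : m ≤ μ1 + σt) :
    U * ((σt * ((V + Q) - (U + P)) - μ1 * U) - σ * (Q - P))
    + V * ((ρ * (U + P) - (V + Q) - (U + P) * (W + Z)) - (ρ * P - Q - P * Z))
    + W * (((U + P) * (V + Q) - β * (W + Z)) - (P * Q - β * Z))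
    ≤ -(m / 2) * ((U ^ 2 + V ^ 2 + W ^ 2) / 2)
      + 4 * R ^ 2 * (σt - σ) ^ 2 / (μ1 + σt) := by
  have hRb : (0:ℝ) ≤ R ^ 2 / β := div_nonneg (sq_nonneg R) hβ.le
  have h1 : (σt + ρ - Z) * (U * V)
      ≤ (2 * R ^ 2 + 2 * (σt - σ) ^ 2) * U ^ 2 + V ^ 2 / 4 := by
    have ha2 : (σt + ρ - Z) ^ 2 ≤ 2 * R ^ 2 + 2 * (σt - σ) ^ 2 := by
      nlinarith [sq_nonneg ((σ + ρ - Z) - (σt - σ)), sq_nonneg P, sq_nonneg Q]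
    nlinarith [sq_nonneg ((σt + ρ - Z) * U - V / 2),
      mul_nonneg (sub_nonneg.2 ha2) (sq_nonneg U)]
  have hQR : Q ^ 2 ≤ R ^ 2 := by nlinarith [sq_nonneg P, sq_nonneg (Z - ρ - σ)]
  have h2 : Q * (U * W) ≤ R ^ 2 / β * U ^ 2 + β / 4 * W ^ 2 := by
    have key : β * (Q * (U * W)) ≤ β * (R ^ 2 / β * U ^ 2 + β / 4 * W ^ 2) := by
      have hid : β * (R ^ 2 / β * U ^ 2 + β / 4 * W ^ 2)
          = R ^ 2 * U ^ 2 + β ^ 2 / 4 * W ^ 2 := by field_simp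
      rw [hid]
      nlinarith [sq_nonneg (Q * U - β / 2 * W), mul_nonneg (sub_nonneg.2 hQR) (sq_nonneg U)]
    exact le_of_mul_le_mul_left key hβ
  have hPQ : (Q - P) ^ 2 ≤ 2 * R ^ 2 := by
    nlinarith [sq_nonneg (P + Q), sq_nonneg (Z - ρ - σ)]
  have h3 : (σt - σ) * (Q - P) * U
      ≤ (μ1 + σt) / 4 * U ^ 2 + 4 * R ^ 2 * (σt - σ) ^ 2 / (μ1 + σt) := by
    have key : (μ1 + σt) * ((σt - σ) * (Q - P) * U)
        ≤ (μ1 + σt) * ((μ1 + σt) / 4 * U ^ 2 + 4 * R ^ 2 * (σt - σ) ^ 2 / (μ1 + σt)) := by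
      have hid : (μ1 + σt) * ((μ1 + σt) / 4 * U ^ 2 + 4 * R ^ 2 * (σt - σ) ^ 2 / (μ1 + σt))
          = (μ1 + σt) ^ 2 / 4 * U ^ 2 + 4 * R ^ 2 * (σt - σ) ^ 2 := by
        field_simp
      rw [hid]
      nlinarith [sq_nonneg ((μ1 + σt) / 2 * U - (σt - σ) * (Q - P)),
        mul_nonneg (sq_nonneg (σt - σ)) (sub_nonneg.2 hPQ),
        mul_nonneg (sq_nonneg R) (sq_nonneg (σt - σ))]
    exact le_of_mul_le_mul_left key hApos
  have hcU : 2 * R ^ 2 + 2 * (σt - σ) ^ 2 + R ^ 2 / β + (μ1 + σt) / 4 + m / 4 ≤ μ1 + σt := by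
    rw [show (8:ℝ) * R ^ 2 / β = 8 * (R ^ 2 / β) by ring] at hA1
    linarith [sq_nonneg (σt - σ), sq_nonneg R, sq_nonneg (σ + ρ)]
  have hU2 : (2 * R ^ 2 + 2 * (σt - σ) ^ 2 + R ^ 2 / β + (μ1 + σt) / 4 + m / 4) * U ^ 2
      ≤ (μ1 + σt) * U ^ 2 := mul_le_mul_of_nonneg_right hcU (sq_nonneg U)
  have hV2 : (1 / 4 + m / 4) * V ^ 2 ≤ 1 * V ^ 2 :=
    mul_le_mul_of_nonneg_right (by linarith) (sq_nonneg V)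
  have hW2 : (β / 4 + m / 4) * W ^ 2 ≤ β * W ^ 2 :=
    mul_le_mul_of_nonneg_right (by linarith) (sq_nonneg W)
  have hGeq : U * ((σt * ((V + Q) - (U + P)) - μ1 * U) - σ * (Q - P))
      + V * ((ρ * (U + P) - (V + Q) - (U + P) * (W + Z)) - (ρ * P - Q - P * Z))
      + W * (((U + P) * (V + Q) - β * (W + Z)) - (P * Q - β * Z))
      = -((μ1 + σt) * U ^ 2) - V ^ 2 - β * W ^ 2 + (σt + ρ - Z) * (U * V) + Q * (U * W)
        + (σt - σ) * (Q - P) * U := by ring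
  rw [hGeq]
  linarith [h1, h2, h3, hU2, hV2, hW2]

/-- The core pointwise energy estimate, stated for the solution values themselves. -/
lemma lorenz_key_ineq' (σ ρ β R σt μ1 m P Q Z XT YT ZT : ℝ)
    (hβ : 0 < β) (hApos : 0 < μ1 + σt)
    (hb : P ^ 2 + Q ^ 2 + (Z - ρ - σ) ^ 2 ≤ R ^ 2)
    (hA1 : 16 * ((σt - σ) ^ 2 + 3 * (σ + ρ) ^ 2 + 2 * R ^ 2) + 8 * R ^ 2 / β ≤ μ1 + σt)
    (hm1 : m ≤ 1) (hmβ : m ≤ β) (hmA : m ≤ μ1 + σt) :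
    (XT - P) * ((σt * (YT - XT) - μ1 * (XT - P)) - σ * (Q - P))
    + (YT - Q) * ((ρ * XT - YT - XT * ZT) - (ρ * P - Q - P * Z))
    + (ZT - Z) * ((XT * YT - β * ZT) - (P * Q - β * Z))
    ≤ -(m / 2) * (((XT - P) ^ 2 + (YT - Q) ^ 2 + (ZT - Z) ^ 2) / 2)
      + 4 * R ^ 2 * (σt - σ) ^ 2 / (μ1 + σt) := by
  have h := lorenz_key_ineq σ ρ β R σt μ1 m P Q Z (XT - P) (YT - Q) (ZT - Z)
    hβ hApos hb hA1 hm1 hmβ hmA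
  linarith [h]

/-- **Corollary 4.1.**
In the special case `ρ̃ = ρ`, `β̃ = β`, `μ2 = μ3 = 0`, with the absorbing-ball bound of
radius `R` and condition (M1), there exists a constant `c1 > 0` depending only on
`R, ρ, σ, β` such that `𝒦(t) ≤ 𝒦(t₀) e^{−(μ/2)(t−t₀)} + (c1/(μ1 + σ̃))(Δσ)²`
for all `0 ≤ t₀ ≤ t`. -/
theorem lorenz_K_energy_decay_single_param (σ ρ β R : ℝ)
    (hσ : 0 < σ) (hρ : 0 < ρ) (hβ : 0 < β) :
    ∃ c1 > (0:ℝ), ∀ (σt μ1 : ℝ) (x y z xt yt zt : ℝ → ℝ),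
      0 ≤ σt → 0 ≤ μ1 →
      (∀ t ≥ (0:ℝ), HasDerivAt x (σ * (y t - x t)) t) →
      (∀ t ≥ (0:ℝ), HasDerivAt y (ρ * x t - y t - x t * z t) t) →
      (∀ t ≥ (0:ℝ), HasDerivAt z (x t * y t - β * z t) t) →
      (∀ t ≥ (0:ℝ), HasDerivAt xt (σt * (yt t - xt t) - μ1 * (xt t - x t)) t) →
      (∀ t ≥ (0:ℝ), HasDerivAt yt (ρ * xt t - yt t - xt t * zt t) t) →
      (∀ t ≥ (0:ℝ), HasDerivAt zt (xt t * yt t - β * zt t) t) →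
      (∀ t ≥ (0:ℝ), (x t) ^ 2 + (y t) ^ 2 + (z t - ρ - σ) ^ 2 ≤ R ^ 2) →
      CondM1 σ ρ σt ρ β μ1 0 0 R →
      ∀ t0 t : ℝ, 0 ≤ t0 → t0 ≤ t →
        Kfun x y z xt yt zt t ≤
          Kfun x y z xt yt zt t0 * Real.exp (-(muMin σt β μ1 0 0 / 2) * (t - t0))
          + c1 / (μ1 + σt) * (σt - σ) ^ 2 := by
  have hμ0 : (0:ℝ) < min (min (48 * (σ + ρ) ^ 2) 1) β :=
    lt_min (lt_min (by positivity) one_pos) hβ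
  have hc1nn : (0:ℝ) ≤ 8 * R ^ 2 / min (min (48 * (σ + ρ) ^ 2) 1) β :=
    div_nonneg (by positivity) hμ0.le
  refine ⟨8 * R ^ 2 / min (min (48 * (σ + ρ) ^ 2) 1) β + 1, by linarith, ?_⟩
  intro σt μ1 x y z xt yt zt hσt hμ1 hx hy hz hxt hyt hzt hball hM1 t0 t ht0 ht0t
  set m := muMin σt β μ1 0 0 with hmdef
  have hmeq : m = min (μ1 + σt) (min 1 β) := by
    rw [hmdef, muMin]; norm_num
  clear_value m
  -- Condition (M1), simplified
  have hA1 : 16 * ((σt - σ) ^ 2 + 3 * (σ + ρ) ^ 2 + 2 * R ^ 2) + 8 * R ^ 2 / β ≤ μ1 + σt := by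
    have h := hM1.1
    have key : (16:ℝ) * (((σt - σ) ^ 2 + 3 * (σ + ρ) ^ 2 + 2 * R ^ 2) / ((0:ℝ) + 1)
        + R ^ 2 / (2 * ((0:ℝ) + β))) =
        16 * ((σt - σ) ^ 2 + 3 * (σ + ρ) ^ 2 + 2 * R ^ 2) + 8 * R ^ 2 / β := by
      field_simp
      ring
    rw [key] at h
    exact h
  have hRb : (0:ℝ) ≤ R ^ 2 / β := div_nonneg (by positivity) hβ.le
  have hA48 : 48 * (σ + ρ) ^ 2 ≤ μ1 + σt := by
    rw [show (8:ℝ) * R ^ 2 / β = 8 * (R ^ 2 / β) by ring] at hA1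
    linarith [sq_nonneg (σt - σ), sq_nonneg R]
  have hApos : 0 < μ1 + σt := lt_of_lt_of_le (by positivity) hA48
  have hmA : m ≤ μ1 + σt := by rw [hmeq]; exact min_le_left _ _
  have hm1 : m ≤ 1 := by rw [hmeq]; exact le_trans (min_le_right _ _) (min_le_left _ _)
  have hmβ : m ≤ β := by rw [hmeq]; exact le_trans (min_le_right _ _) (min_le_right _ _)
  have hmpos : 0 < m := by rw [hmeq]; exact lt_min hApos (lt_min one_pos hβ)
  have hμ0m : min (min (48 * (σ + ρ) ^ 2) 1) β ≤ m := by
    rw [hmeq]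
    exact le_min (le_trans (le_trans (min_le_left _ _) (min_le_left _ _)) hA48)
      (le_min (le_trans (min_le_left _ _) (min_le_right _ _)) (min_le_right _ _))
  -- the derivative of the energy along the flow
  have hf' : ∀ s ∈ Set.Icc t0 t, HasDerivAt (Kfun x y z xt yt zt)
      ((xt s - x s) * ((σt * (yt s - xt s) - μ1 * (xt s - x s)) - σ * (y s - x s))
        + (yt s - y s) * ((ρ * xt s - yt s - xt s * zt s) - (ρ * x s - y s - x s * z s))
        + (zt s - z s) * ((xt s * yt s - β * zt s) - (x s * y s - β * z s))) s := by
    intro s hs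
    have hs0 : (0:ℝ) ≤ s := le_trans ht0 hs.1
    have hu : HasDerivAt (fun r => xt r - x r) _ s := (hxt s hs0).sub (hx s hs0)
    have hv : HasDerivAt (fun r => yt r - y r) _ s := (hyt s hs0).sub (hy s hs0)
    have hw : HasDerivAt (fun r => zt r - z r) _ s := (hzt s hs0).sub (hz s hs0)
    have H : HasDerivAt
        (fun r => ((xt r - x r) ^ 2 + (yt r - y r) ^ 2 + (zt r - z r) ^ 2) / 2) _ s :=
      (((hu.pow 2).add (hv.pow 2)).add (hw.pow 2)).div_const 2
    show HasDerivAt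
      (fun r => ((xt r - x r) ^ 2 + (yt r - y r) ^ 2 + (zt r - z r) ^ 2) / 2) _ s
    convert H using 1
    ring
  -- the differential inequality
  have hbound : ∀ s ∈ Set.Ico t0 t,
      (xt s - x s) * ((σt * (yt s - xt s) - μ1 * (xt s - x s)) - σ * (y s - x s))
        + (yt s - y s) * ((ρ * xt s - yt s - xt s * zt s) - (ρ * x s - y s - x s * z s))
        + (zt s - z s) * ((xt s * yt s - β * zt s) - (x s * y s - β * z s))
      ≤ -(m / 2) * Kfun x y z xt yt zt s + 4 * R ^ 2 * (σt - σ) ^ 2 / (μ1 + σt) := by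
    intro s hs
    have hs0 : (0:ℝ) ≤ s := le_trans ht0 hs.1
    have hb := hball s hs0
    simp only [Kfun]
    exact lorenz_key_ineq' σ ρ β R σt μ1 m (x s) (y s) (z s) (xt s) (yt s) (zt s)
      hβ hApos hb hA1 hm1 hmβ hmA
  -- Grönwall on `[t0, t]`
  have hgr := gronwall_hasDerivAt' hf' (le_refl (Kfun x y z xt yt zt t0)) hbound t
    (Set.mem_Icc.2 ⟨ht0t, le_refl t⟩)
  have hKne : -(m / 2) ≠ 0 := by
    intro h
    have hm0 : m = 0 := by linarith [neg_eq_zero.1 h]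
    exact absurd hm0 (ne_of_gt hmpos)
  have hval : gronwallBound (Kfun x y z xt yt zt t0) (-(m / 2))
      (4 * R ^ 2 * (σt - σ) ^ 2 / (μ1 + σt)) (t - t0)
      = Kfun x y z xt yt zt t0 * Real.exp (-(m / 2) * (t - t0))
        + (4 * R ^ 2 * (σt - σ) ^ 2 / (μ1 + σt)) / (-(m / 2))
          * (Real.exp (-(m / 2) * (t - t0)) - 1) := by
    rw [gronwallBound_of_K_ne_0 hKne]
  rw [hval] at hgr
  set E := Real.exp (-(m / 2) * (t - t0)) with hEdef
  have hE0 : 0 < E := Real.exp_pos _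
  have hE1 : E ≤ 1 := by
    rw [hEdef]
    apply Real.exp_le_one_iff.2
    nlinarith
  have h8c1 : 8 * R ^ 2 / m ≤ 8 * R ^ 2 / min (min (48 * (σ + ρ) ^ 2) 1) β + 1 := by
    have h := div_le_div_of_nonneg_left (show (0:ℝ) ≤ 8 * R ^ 2 by positivity) hμ0 hμ0m
    linarith
  have hterm : (4 * R ^ 2 * (σt - σ) ^ 2 / (μ1 + σt)) / (-(m / 2)) * (E - 1)
      ≤ (8 * R ^ 2 / min (min (48 * (σ + ρ) ^ 2) 1) β + 1) / (μ1 + σt) * (σt - σ) ^ 2 := by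
    have heq : (4 * R ^ 2 * (σt - σ) ^ 2 / (μ1 + σt)) / (-(m / 2)) * (E - 1)
        = (8 * R ^ 2 / m) * ((σt - σ) ^ 2 / (μ1 + σt)) * (1 - E) := by
      field_simp
      ring
    rw [heq]
    have hXnn : 0 ≤ (8 * R ^ 2 / m) * ((σt - σ) ^ 2 / (μ1 + σt)) :=
      mul_nonneg (div_nonneg (by positivity) hmpos.le)
        (div_nonneg (sq_nonneg _) hApos.le)
    have h2' : (8 * R ^ 2 / m) * ((σt - σ) ^ 2 / (μ1 + σt)) * (1 - E)
        ≤ (8 * R ^ 2 / m) * ((σt - σ) ^ 2 / (μ1 + σt)) * 1 :=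
      mul_le_mul_of_nonneg_left (by linarith) hXnn
    have h1' : (8 * R ^ 2 / m) * ((σt - σ) ^ 2 / (μ1 + σt))
        ≤ (8 * R ^ 2 / min (min (48 * (σ + ρ) ^ 2) 1) β + 1) * ((σt - σ) ^ 2 / (μ1 + σt)) :=
      mul_le_mul_of_nonneg_right h8c1 (div_nonneg (sq_nonneg _) hApos.le)
    have hfin : (8 * R ^ 2 / min (min (48 * (σ + ρ) ^ 2) 1) β + 1) * ((σt - σ) ^ 2 / (μ1 + σt))
        = (8 * R ^ 2 / min (min (48 * (σ + ρ) ^ 2) 1) β + 1) / (μ1 + σt) * (σt - σ) ^ 2 := by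
      ring
    rw [mul_one] at h2'
    linarith
  linarith [hgr, hterm]
end

section
/- Suppose the Lorenz system with parameters σ, ρ, β > 0 admits an absorbing-ball bound of radius R, and the nudged system has exactly matching parameters σ̃ = σ, ρ̃ = ρ, β̃ = β, with coefficients μ1, μ2, μ3 ≥ 0 satisfying condition (M1) (which with zero parameter errors reads μ1 + σ ≥ 16[(3(σ + ρ)² + 2R²)/(μ2 + 1) + R²/(2(μ3 + β))]). Then the nudged system synchronizes exponentially with the Lorenz system: for all 0 ≤ t_0 ≤ t, 𝒦(t) ≤ 𝒦(t_0) e^{−(μ/2)(t − t_0)}; in particular u(t), v(t), w(t) → 0 exponentially fast as t → ∞. -/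
set_option maxHeartbeats 1000000


lemma lorenz_key_alg (σ ρ β μ1 μ2 μ3 μ R X Y Z u v w : ℝ)
    (hA : 0 < μ1 + σ) (hB : 0 < μ2 + 1) (hC : 0 < μ3 + β)
    (hm1 : μ ≤ μ1 + σ) (hm2 : μ ≤ μ2 + 1) (hm3 : μ ≤ μ3 + β)
    (hball : X ^ 2 + Y ^ 2 + (Z - ρ - σ) ^ 2 ≤ R ^ 2)
    (hAineq : R ^ 2 * (μ3 + β) + R ^ 2 * (μ2 + 1) ≤ (μ1 + σ) * (μ2 + 1) * (μ3 + β)) :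
    u * (σ * (v - u) - μ1 * u)
      + v * (ρ * u - v - u * Z - X * w - u * w - μ2 * v)
      + w * (u * Y + X * v + u * v - β * w - μ3 * w)
      + μ / 2 * ((u ^ 2 + v ^ 2 + w ^ 2) / 2) ≤ 0 := by
  have ha2 : (Z - ρ - σ) ^ 2 ≤ R ^ 2 := by linarith [sq_nonneg X, sq_nonneg Y]
  have hY2 : Y ^ 2 ≤ R ^ 2 := by linarith [sq_nonneg X, sq_nonneg (Z - ρ - σ)]
  have h5 : 2 * ((μ2 + 1) * (μ3 + β)) * (-( (Z - ρ - σ) * u * v) + Y * u * w)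
      ≤ 2 * ((μ2 + 1) * (μ3 + β)) *
        ((μ1 + σ) / 2 * u ^ 2 + (μ2 + 1) / 2 * v ^ 2 + (μ3 + β) / 2 * w ^ 2) := by
    nlinarith [mul_nonneg hC.le (sq_nonneg ((Z - ρ - σ) * u + (μ2 + 1) * v)),
      mul_nonneg hB.le (sq_nonneg (Y * u - (μ3 + β) * w)),
      mul_le_mul_of_nonneg_right ha2 (mul_nonneg hC.le (sq_nonneg u)),
      mul_le_mul_of_nonneg_right hY2 (mul_nonneg hB.le (sq_nonneg u)),
      mul_le_mul_of_nonneg_right hAineq (sq_nonneg u)]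
  have h5' : -((Z - ρ - σ) * u * v) + Y * u * w
      ≤ (μ1 + σ) / 2 * u ^ 2 + (μ2 + 1) / 2 * v ^ 2 + (μ3 + β) / 2 * w ^ 2 :=
    le_of_mul_le_mul_left h5 (by positivity)
  have m1 : μ / 4 * u ^ 2 ≤ (μ1 + σ) / 2 * u ^ 2 :=
    mul_le_mul_of_nonneg_right (by linarith) (sq_nonneg u)
  have m2 : μ / 4 * v ^ 2 ≤ (μ2 + 1) / 2 * v ^ 2 :=
    mul_le_mul_of_nonneg_right (by linarith) (sq_nonneg v)
  have m3 : μ / 4 * w ^ 2 ≤ (μ3 + β) / 2 * w ^ 2 :=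
    mul_le_mul_of_nonneg_right (by linarith) (sq_nonneg w)
  nlinarith [h5', m1, m2, m3]

/-- **Synchronization of the nudged system when the parameters are exactly known.**
If `σ̃ = σ`, `ρ̃ = ρ`, `β̃ = β` and the nudging coefficients satisfy condition (M1)
(which with zero parameter errors reads
`μ1 + σ ≥ 16[(3(σ+ρ)² + 2R²)/(μ2+1) + R²/(2(μ3+β))]`), then
`𝒦(t) ≤ 𝒦(t₀) e^{−(μ/2)(t−t₀)}` for all `0 ≤ t₀ ≤ t`; in particular the differences
`u, v, w` tend to `0` exponentially fast as `t → ∞`. -/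
theorem lorenz_nudged_synchronization (σ ρ β μ1 μ2 μ3 R : ℝ)
    (hσ : 0 < σ) (hρ : 0 < ρ) (hβ : 0 < β)
    (hμ1 : 0 ≤ μ1) (hμ2 : 0 ≤ μ2) (hμ3 : 0 ≤ μ3)
    (x y z xt yt zt : ℝ → ℝ)
    (hx : ∀ t ≥ (0:ℝ), HasDerivAt x (σ * (y t - x t)) t)
    (hy : ∀ t ≥ (0:ℝ), HasDerivAt y (ρ * x t - y t - x t * z t) t)
    (hz : ∀ t ≥ (0:ℝ), HasDerivAt z (x t * y t - β * z t) t)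
    (hxt : ∀ t ≥ (0:ℝ), HasDerivAt xt (σ * (yt t - xt t) - μ1 * (xt t - x t)) t)
    (hyt : ∀ t ≥ (0:ℝ),
      HasDerivAt yt (ρ * xt t - yt t - xt t * zt t - μ2 * (yt t - y t)) t)
    (hzt : ∀ t ≥ (0:ℝ),
      HasDerivAt zt (xt t * yt t - β * zt t - μ3 * (zt t - z t)) t)
    (hball : ∀ t ≥ (0:ℝ), (x t) ^ 2 + (y t) ^ 2 + (z t - ρ - σ) ^ 2 ≤ R ^ 2)
    (hM1 : μ1 + σ ≥ 16 * ((3 * (σ + ρ) ^ 2 + 2 * R ^ 2) / (μ2 + 1)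
        + R ^ 2 / (2 * (μ3 + β)))) :
    (∀ t0 t : ℝ, 0 ≤ t0 → t0 ≤ t →
      Kfun x y z xt yt zt t ≤
        Kfun x y z xt yt zt t0 * Real.exp (-(muMin σ β μ1 μ2 μ3 / 2) * (t - t0))) ∧
    Filter.Tendsto (fun t => xt t - x t) Filter.atTop (nhds 0) ∧
    Filter.Tendsto (fun t => yt t - y t) Filter.atTop (nhds 0) ∧
    Filter.Tendsto (fun t => zt t - z t) Filter.atTop (nhds 0) := by
  set μ := muMin σ β μ1 μ2 μ3 with hμdef
  have hA : 0 < μ1 + σ := by linarith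
  have hB : 0 < μ2 + 1 := by linarith
  have hC : 0 < μ3 + β := by linarith
  have hμpos : 0 < μ := by
    rw [hμdef, muMin]; exact lt_min hA (lt_min hB hC)
  have hm1 : μ ≤ μ1 + σ := min_le_left _ _
  have hm2 : μ ≤ μ2 + 1 := le_trans (min_le_right _ _) (min_le_left _ _)
  have hm3 : μ ≤ μ3 + β := le_trans (min_le_right _ _) (min_le_right _ _)
  -- clear denominators in hM1
  have hAineq : R ^ 2 * (μ3 + β) + R ^ 2 * (μ2 + 1)
      ≤ (μ1 + σ) * (μ2 + 1) * (μ3 + β) := by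
    rw [ge_iff_le, div_add_div _ _ hB.ne' (by positivity : (2 * (μ3 + β)) ≠ 0),
      ← mul_div_assoc] at hM1
    have h16 := (div_le_iff₀ (by positivity : (0:ℝ) < (μ2 + 1) * (2 * (μ3 + β)))).mp hM1
    nlinarith [mul_nonneg (sq_nonneg R) hC.le, mul_nonneg (sq_nonneg R) hB.le,
      mul_nonneg (sq_nonneg (σ + ρ)) hC.le]
  set K : ℝ → ℝ := Kfun x y z xt yt zt with hKdef
  -- the derivative of K at t ≥ 0
  have hKderiv : ∀ t, 0 ≤ t → HasDerivAt K
      (2 * (xt t - x t) ^ 1 * ((σ * (yt t - xt t) - μ1 * (xt t - x t)) - σ * (y t - x t))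
        / 2
      + 2 * (yt t - y t) ^ 1 *
          ((ρ * xt t - yt t - xt t * zt t - μ2 * (yt t - y t))
            - (ρ * x t - y t - x t * z t)) / 2
      + 2 * (zt t - z t) ^ 1 *
          ((xt t * yt t - β * zt t - μ3 * (zt t - z t)) - (x t * y t - β * z t)) / 2) t := by
    intro t ht
    have hu := ((hxt t ht).sub (hx t ht)).pow 2
    have hv := ((hyt t ht).sub (hy t ht)).pow 2
    have hw := ((hzt t ht).sub (hz t ht)).pow 2
    have := ((hu.add hv).add hw).div_const 2
    simp only [Nat.cast_ofNat] at this
    rw [hKdef]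
    exact this.congr_deriv (by simp only [Pi.sub_apply]; ring)
  have hKbound : ∀ t, 0 ≤ t →
      (2 * (xt t - x t) ^ 1 * ((σ * (yt t - xt t) - μ1 * (xt t - x t)) - σ * (y t - x t))
        / 2
      + 2 * (yt t - y t) ^ 1 *
          ((ρ * xt t - yt t - xt t * zt t - μ2 * (yt t - y t))
            - (ρ * x t - y t - x t * z t)) / 2
      + 2 * (zt t - z t) ^ 1 *
          ((xt t * yt t - β * zt t - μ3 * (zt t - z t)) - (x t * y t - β * z t)) / 2)
      + μ / 2 * K t ≤ 0 := by
    intro t ht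
    have key := lorenz_key_alg σ ρ β μ1 μ2 μ3 μ R (x t) (y t) (z t)
      (xt t - x t) (yt t - y t) (zt t - z t) hA hB hC hm1 hm2 hm3 (hball t ht) hAineq
    have hKval : K t = ((xt t - x t) ^ 2 + (yt t - y t) ^ 2 + (zt t - z t) ^ 2) / 2 := rfl
    rw [hKval]
    nlinarith [key]
  -- F t = K t * exp (μ/2 * t) is antitone on [0, ∞)
  set F : ℝ → ℝ := fun t => K t * Real.exp (μ / 2 * t) with hFdef
  have hFderiv : ∀ t, 0 ≤ t → ∃ d, HasDerivAt F d t ∧ d ≤ 0 := by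
    intro t ht
    have hexp : HasDerivAt (fun s : ℝ => Real.exp (μ / 2 * s))
        (Real.exp (μ / 2 * t) * (μ / 2)) t := by
      simpa using ((hasDerivAt_id t).const_mul (μ / 2)).exp
    have hmul := (hKderiv t ht).mul hexp
    refine ⟨_, hmul, ?_⟩
    have hb := hKbound t ht
    have he : 0 < Real.exp (μ / 2 * t) := Real.exp_pos _
    calc _ = ((2 * (xt t - x t) ^ 1 * ((σ * (yt t - xt t) - μ1 * (xt t - x t)) - σ * (y t - x t))
        / 2
      + 2 * (yt t - y t) ^ 1 *
          ((ρ * xt t - yt t - xt t * zt t - μ2 * (yt t - y t))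
            - (ρ * x t - y t - x t * z t)) / 2
      + 2 * (zt t - z t) ^ 1 *
          ((xt t * yt t - β * zt t - μ3 * (zt t - z t)) - (x t * y t - β * z t)) / 2)
        + μ / 2 * K t) * Real.exp (μ / 2 * t) := by ring
      _ ≤ 0 * Real.exp (μ / 2 * t) := by
          exact mul_le_mul_of_nonneg_right hb he.le
      _ = 0 := by ring
  have hFanti : AntitoneOn F (Set.Ici (0:ℝ)) := by
    apply antitoneOn_of_deriv_nonpos (convex_Ici 0)
    · intro t ht
      obtain ⟨d, hd, _⟩ := hFderiv t ht
      exact hd.continuousAt.continuousWithinAt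
    · intro t ht
      rw [interior_Ici] at ht
      obtain ⟨d, hd, _⟩ := hFderiv t ht.le
      exact hd.differentiableAt.differentiableWithinAt
    · intro t ht
      rw [interior_Ici] at ht
      obtain ⟨d, hd, hd0⟩ := hFderiv t ht.le
      rw [hd.deriv]
      exact hd0
  have hmain : ∀ t0 t : ℝ, 0 ≤ t0 → t0 ≤ t →
      K t ≤ K t0 * Real.exp (-(μ / 2) * (t - t0)) := by
    intro t0 t ht0 htt
    have hF := hFanti (Set.mem_Ici.mpr ht0) (Set.mem_Ici.mpr (le_trans ht0 htt)) htt
    rw [show -(μ / 2) * (t - t0) = μ / 2 * t0 - μ / 2 * t by ring, Real.exp_sub,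
      ← mul_div_assoc, le_div_iff₀ (Real.exp_pos _)]
    exact hF
  refine ⟨hmain, ?_, ?_, ?_⟩
  all_goals {
    have hKnonneg : ∀ t : ℝ, 0 ≤ K t := by
      intro t
      have : K t = ((xt t - x t) ^ 2 + (yt t - y t) ^ 2 + (zt t - z t) ^ 2) / 2 := rfl
      rw [this]; positivity
    have hKtend : Filter.Tendsto K Filter.atTop (nhds 0) := by
      have hexp : Filter.Tendsto (fun t : ℝ => K 0 * Real.exp (-(μ / 2) * (t - 0)))
          Filter.atTop (nhds (K 0 * 0)) := by
        apply Filter.Tendsto.const_mul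
        apply Real.tendsto_exp_atBot.comp
        have h1 : Filter.Tendsto (fun t : ℝ => μ / 2 * t) Filter.atTop Filter.atTop :=
          Filter.Tendsto.const_mul_atTop (by positivity) Filter.tendsto_id
        have h2 := Filter.tendsto_neg_atTop_atBot.comp h1
        apply h2.congr
        intro t
        simp [neg_mul]
      rw [mul_zero] at hexp
      apply squeeze_zero' (Filter.Eventually.of_forall hKnonneg) ?_ hexp
      filter_upwards [Filter.eventually_ge_atTop (0:ℝ)] with t ht
      exact hmain 0 t le_rfl ht
    have hsq : Filter.Tendsto (fun t => Real.sqrt (2 * K t)) Filter.atTop (nhds 0) := by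
      have : Filter.Tendsto (fun t => 2 * K t) Filter.atTop (nhds (2 * 0)) :=
        hKtend.const_mul 2
      rw [mul_zero] at this
      have h3 := (Real.continuous_sqrt.tendsto 0).comp this
      rw [Real.sqrt_zero] at h3
      exact h3
    apply squeeze_zero_norm' ?_ hsq
    filter_upwards [Filter.eventually_ge_atTop (0:ℝ)] with t ht
    have hKval : K t = ((xt t - x t) ^ 2 + (yt t - y t) ^ 2 + (zt t - z t) ^ 2) / 2 := rfl
    rw [Real.norm_eq_abs, ← Real.sqrt_sq_eq_abs]
    apply Real.sqrt_le_sqrt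
    rw [hKval]
    nlinarith [sq_nonneg (xt t - x t), sq_nonneg (yt t - y t), sq_nonneg (zt t - z t)]
  }
end
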